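/- Common bibasic generalization of Entries 1.4.3 and 1.4.4: Let q, h, t be complex numbers with |q^h| < 1, |q^t| < 1 and |q^{ht}| < 1 (principal complex powers), and let a, b be complex numbers with |a q^t| < 1 such that all denominators below are nonzero. Then ∑_{j=0}^∞ (a q^t)^j / [(q^t;q^t)_j · (bq;q^h)_{tj}] = [1 / ((aq^t;q^t)_∞ (bq;q^h)_∞)] · ∑_{k=0}^∞ [(aq^t;q^t)_{hk} / (q^h;q^h)_k] · (−bq)^k · (q^h)^{k(k−1)/2}. -/

import Mathlib

open Complex Filter

/-- Finite q-Pochhammer symbol `(A;Q)_k = ∏_{r=0}^{k-1} (1 - A Q^r)`. -/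
noncomputable def qp (A Q : ℂ) (k : ℕ) : ℂ := ∏ r ∈ Finset.range k, (1 - A * Q ^ r)

/-- Infinite q-Pochhammer symbol `(A;Q)_∞ = ∏_{r=0}^{∞} (1 - A Q^r)`. -/
noncomputable def qpInf (A Q : ℂ) : ℂ := ∏' r : ℕ, (1 - A * Q ^ r)

/-- q-Pochhammer symbol with (possibly non-integer) index:
`(A;Q)_{c k} := (A;Q)_∞ / (A R^k;Q)_∞` where `R = Q^c`. -/
noncomputable def qpc (A Q R : ℂ) (k : ℕ) : ℂ := qpInf A Q / qpInf (A * R ^ k) Q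

/-- q-Pochhammer symbol with shifted (possibly non-integer) index:
`(A;Q)_{c k + 1} := (A;Q)_∞ / (A Q R^k;Q)_∞` where `R = Q^c`. -/
noncomputable def qpc1 (A Q R : ℂ) (k : ℕ) : ℂ := qpInf A Q / qpInf (A * Q * R ^ k) Q

noncomputable abbrev Complex.abs : AbsoluteValue ℂ ℝ := NormedField.toAbsoluteValue ℂ

lemma Complex.norm_eq_abs (z : ℂ) : ‖z‖ = Complex.abs z := rfl


lemma qp_succ (A Q : ℂ) (n : ℕ) : qp A Q (n + 1) = qp A Q n * (1 - A * Q ^ n) :=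
  Finset.prod_range_succ _ _

lemma qp_succ' (A Q : ℂ) (n : ℕ) : qp A Q (n + 1) = (1 - A) * qp (A * Q) Q n := by
  have h : ∀ r ∈ Finset.range n, (1 - A * Q ^ (r + 1)) = (1 - A * Q * Q ^ r) :=
    fun r _ => by rw [pow_succ]; ring
  rw [qp, Finset.prod_range_succ', Finset.prod_congr rfl h, ← qp, pow_zero, mul_one, mul_comm]

lemma choose_step (n : ℕ) : (n + 1) * n / 2 = n * (n - 1) / 2 + n := by
  have h1 := Nat.choose_two_right (n + 1)
  have h2 := Nat.choose_two_right n
  have h3 : (n + 1).choose 2 = n.choose 1 + n.choose 2 := Nat.choose_succ_succ n 1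
  have h4 := Nat.choose_one_right n
  simp only [Nat.add_sub_cancel] at h1
  omega

-- factor nonzero
lemma factor_ne {Q : ℂ} (hQ : Complex.abs Q < 1) (n : ℕ) : (1 : ℂ) - Q * Q ^ n ≠ 0 := by
  intro h
  have h2 : Q * Q ^ n = 1 := by linear_combination -h
  have : Complex.abs (Q * Q ^ n) < 1 := by
    rw [map_mul, map_pow]
    calc Complex.abs Q * Complex.abs Q ^ n ≤ Complex.abs Q * 1 := by
          exact mul_le_mul_of_nonneg_left (pow_le_one₀ (AbsoluteValue.nonneg _ _) hQ.le)
            (AbsoluteValue.nonneg _ _)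
      _ < 1 := by simpa using hQ
  rw [h2] at this; simp at this

lemma qp_q_ne {Q : ℂ} (hQ : Complex.abs Q < 1) (n : ℕ) : qp Q Q n ≠ 0 := by
  rw [qp, Finset.prod_ne_zero_iff]
  intro r _
  have := factor_ne hQ r
  simpa [pow_succ] using this

-- Multipliability of the qpInf product
lemma multipliable_qp (A : ℂ) {Q : ℂ} (hQ : Complex.abs Q < 1) :
    Multipliable fun r : ℕ => 1 - A * Q ^ r := by
  by_cases hz : ∃ r0 : ℕ, 1 - A * Q ^ r0 = 0
  · obtain ⟨r0, hr0⟩ := hz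
    refine ⟨0, ?_⟩
    rw [HasProd]
    have : ∀ᶠ s : Finset ℕ in atTop, ∏ i ∈ s, (1 - A * Q ^ i) = 0 := by
      filter_upwards [Filter.eventually_ge_atTop ({r0} : Finset ℕ)] with s hs
      exact Finset.prod_eq_zero (hs (Finset.mem_singleton_self r0)) hr0
    exact Tendsto.congr' (this.mono fun s hs => hs.symm) tendsto_const_nhds
  · push_neg at hz
    refine Complex.multipliable_of_summable_log ?_
    have hg : Summable fun r : ℕ => 3 / 2 * Complex.abs A * Complex.abs Q ^ r :=
      (summable_geometric_of_lt_one (AbsoluteValue.nonneg _ _) hQ).mul_left _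
    refine Summable.of_norm_bounded_eventually hg ?_
    rw [Nat.cofinite_eq_atTop]
    have hto : Tendsto (fun r : ℕ => Complex.abs A * Complex.abs Q ^ r) atTop (nhds 0) := by
      simpa using (tendsto_pow_atTop_nhds_zero_of_lt_one (AbsoluteValue.nonneg _ _) hQ).const_mul
        (Complex.abs A)
    filter_upwards [hto.eventually_le_const (by norm_num : (0:ℝ) < 1/2)] with r hr
    have h1 : ‖-(A * Q ^ r)‖ ≤ 1 / 2 := by
      rw [norm_neg]
      simpa [Complex.norm_eq_abs, map_mul, map_pow] using hr
    have := Complex.norm_log_one_add_half_le_self h1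
    rw [show (1 : ℂ) + -(A * Q ^ r) = 1 - A * Q ^ r by ring] at this
    refine this.trans ?_
    rw [norm_neg]
    rw [Complex.norm_eq_abs, map_mul, map_pow, mul_assoc]

lemma tendsto_qp (A : ℂ) {Q : ℂ} (hQ : Complex.abs Q < 1) :
    Tendsto (fun N => qp A Q N) atTop (nhds (qpInf A Q)) :=
  (multipliable_qp A hQ).hasProd.tendsto_prod_nat

/-- Euler coefficients. -/
noncomputable def ec (Q : ℂ) (k : ℕ) : ℂ := (-1) ^ k * Q ^ (k * (k - 1) / 2) / qp Q Q k

lemma ec_zero (Q : ℂ) : ec Q 0 = 1 := by simp [ec, qp]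

lemma ec_succ {Q : ℂ} (hQ : Complex.abs Q < 1) (n : ℕ) :
    ec Q (n + 1) = ec Q n * (-(Q ^ n)) / (1 - Q * Q ^ n) := by
  rw [ec, ec, qp_succ, show (n + 1) * ((n + 1) - 1) / 2 = n * (n - 1) / 2 + n from
    by simpa using choose_step n, pow_add, pow_succ]
  have h1 := qp_q_ne hQ n
  have h2 := factor_ne hQ n
  field_simp
  ring

lemma abs_le_one_of_lt_one {z : ℂ} (h : Complex.abs z < 1) (n : ℕ) :
    Complex.abs (z ^ n) ≤ 1 := by
  rw [map_pow]; exact pow_le_one₀ (AbsoluteValue.nonneg _ _) h.le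

/-- Summability of the Euler series `∑ ec Q k * x^k` in norm. -/
lemma summable_ec (x : ℂ) {Q : ℂ} (hQ : Complex.abs Q < 1) :
    Summable fun k => ‖ec Q k * x ^ k‖ := by
  refine summable_of_ratio_norm_eventually_le (r := 1 / 2) (by norm_num) ?_
  have hto : Tendsto (fun k : ℕ => Complex.abs x * Complex.abs Q ^ k) atTop (nhds 0) := by
    simpa using (tendsto_pow_atTop_nhds_zero_of_lt_one (AbsoluteValue.nonneg _ _) hQ).const_mul
      (Complex.abs x)
  filter_upwards [hto.eventually_le_const (by
    have := hQ; nlinarith [AbsoluteValue.nonneg Complex.abs Q] : (0:ℝ) < (1 - Complex.abs Q) / 2)]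
    with k hk
  have h2 := factor_ne hQ k
  have hd : (1 : ℝ) - Complex.abs Q ≤ Complex.abs (1 - Q * Q ^ k) := by
    calc (1 : ℝ) - Complex.abs Q ≤ 1 - Complex.abs (Q * Q ^ k) := by
          have : Complex.abs (Q * Q ^ k) ≤ Complex.abs Q := by
            rw [map_mul]
            nlinarith [abs_le_one_of_lt_one hQ k, AbsoluteValue.nonneg Complex.abs Q,
              AbsoluteValue.nonneg Complex.abs (Q ^ k)]
          linarith
      _ ≤ Complex.abs (1 - Q * Q ^ k) := by
          have := AbsoluteValue.le_sub Complex.abs (1 : ℂ) (Q * Q ^ k)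
          simpa using this
  rw [norm_norm, norm_norm, ec_succ hQ k]
  rw [norm_mul, norm_mul, norm_div, norm_mul, norm_neg, norm_pow, norm_pow]
  rw [Complex.norm_eq_abs, Complex.norm_eq_abs, Complex.norm_eq_abs, Complex.norm_eq_abs,
    Complex.norm_eq_abs]
  have hQk : Complex.abs (1 - Q * Q ^ k) > 0 := by
    have := AbsoluteValue.pos Complex.abs h2; exact this
  rw [div_mul_eq_mul_div, pow_succ]
  rw [div_le_iff₀ hQk]
  have key : Complex.abs (ec Q k) * Complex.abs Q ^ k * (Complex.abs x ^ k * Complex.abs x)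
      = (Complex.abs (ec Q k) * Complex.abs x ^ k) * (Complex.abs x * Complex.abs Q ^ k) := by
    ring
  calc Complex.abs (ec Q k) * Complex.abs Q ^ k * (Complex.abs x ^ k * Complex.abs x)
      = (Complex.abs (ec Q k) * Complex.abs x ^ k) * (Complex.abs x * Complex.abs Q ^ k) := key
    _ ≤ (Complex.abs (ec Q k) * Complex.abs x ^ k) * ((1 - Complex.abs Q) / 2) := by
        refine mul_le_mul_of_nonneg_left hk ?_
        positivity
    _ ≤ 1 / 2 * (Complex.abs (ec Q k) * Complex.abs x ^ k) * Complex.abs (1 - Q * Q ^ k) := by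
        rw [mul_comm (Complex.abs (ec Q k) * Complex.abs x ^ k) ((1 - Complex.abs Q) / 2)]
        rw [mul_assoc]
        rw [show (1:ℝ) / 2 * ((Complex.abs (ec Q k) * Complex.abs x ^ k) *
          Complex.abs (1 - Q * Q ^ k)) = (Complex.abs (1 - Q * Q ^ k) / 2) *
          (Complex.abs (ec Q k) * Complex.abs x ^ k) from by ring]
        refine mul_le_mul_of_nonneg_right ?_ (by positivity)
        linarith
    _ = 1 / 2 * (Complex.abs (ec Q k) * Complex.abs (x ^ k)) * Complex.abs (1 - Q * Q ^ k) := by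
        rw [map_pow]

/-- Summability of `∑ x^n / (Q;Q)_n` in norm, for `|x| < 1`. -/
lemma summable_geo_qp {x Q : ℂ} (hQ : Complex.abs Q < 1) (hx : Complex.abs x < 1) :
    Summable fun n => ‖x ^ n / qp Q Q n‖ := by
  set r : ℝ := (1 + Complex.abs x) / 2 with hr
  have hr1 : r < 1 := by rw [hr]; linarith
  refine summable_of_ratio_norm_eventually_le (r := r) hr1 ?_
  have hto : Tendsto (fun n : ℕ => r * (1 - Complex.abs Q ^ (n + 1))) atTop (nhds r) := by
    have h1 : Tendsto (fun n : ℕ => Complex.abs Q ^ (n + 1)) atTop (nhds 0) := by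
      have := tendsto_pow_atTop_nhds_zero_of_lt_one (AbsoluteValue.nonneg _ Q) hQ
      exact this.comp (tendsto_add_atTop_nat 1)
    have := (tendsto_const_nhds (x := (1:ℝ)) (f := atTop (α := ℕ))).sub h1
    simpa using (this.const_mul r)
  have hxr : Complex.abs x < r := by rw [hr]; linarith
  filter_upwards [hto.eventually_const_lt hxr] with n hn
  rw [norm_norm, norm_norm, qp_succ, norm_div, norm_div, norm_mul, norm_pow, norm_pow]
  simp only [Complex.norm_eq_abs]
  have h2 := factor_ne hQ n
  have hq : Complex.abs (qp Q Q n) > 0 := AbsoluteValue.pos Complex.abs (qp_q_ne hQ n)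
  have hf : Complex.abs (1 - Q * Q ^ n) > 0 := AbsoluteValue.pos Complex.abs h2
  have hlow : 1 - Complex.abs Q ^ (n + 1) ≤ Complex.abs (1 - Q * Q ^ n) := by
    have h3 : Complex.abs (Q * Q ^ n) = Complex.abs Q ^ (n + 1) := by
      rw [map_mul, map_pow, pow_succ, mul_comm]
    have := AbsoluteValue.le_sub Complex.abs (1 : ℂ) (Q * Q ^ n)
    simp only [map_one] at this
    rw [h3] at this
    linarith
  have hArF : Complex.abs x ≤ r * Complex.abs (1 - Q * Q ^ n) := by
    refine le_trans hn.le (mul_le_mul_of_nonneg_left hlow (by rw [hr]; positivity))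
  rw [show r * (Complex.abs x ^ n / Complex.abs (qp Q Q n))
      = (r * Complex.abs x ^ n) / Complex.abs (qp Q Q n) from by ring]
  rw [div_le_div_iff₀ (by positivity) hq, pow_succ]
  nlinarith [mul_le_mul_of_nonneg_left hArF
    (by positivity : (0:ℝ) ≤ Complex.abs x ^ n * Complex.abs (qp Q Q n))]

set_option maxHeartbeats 1000000 in
/-- Limit of power series along `Q^N x → 0`. -/
lemma tendsto_series (c : ℕ → ℂ) (x : ℂ) {Q : ℂ} (hQ : Complex.abs Q < 1)
    (hs : Summable fun k => ‖c k * x ^ k‖) :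
    Tendsto (fun N => ∑' k, c k * (Q ^ N * x) ^ k) atTop (nhds (c 0)) := by
  have habs : ∀ N : ℕ, ∀ k : ℕ, ‖c k * (Q ^ N * x) ^ k‖ ≤ ‖c k * x ^ k‖ := by
    intro N k
    rw [norm_mul, norm_mul, mul_pow, norm_mul, norm_pow, norm_pow, norm_pow]
    have h1 : (‖Q‖ ^ N) ^ k ≤ 1 := by
      refine pow_le_one₀ (pow_nonneg (norm_nonneg _) _) ?_
      refine pow_le_one₀ (norm_nonneg _) ?_
      rw [Complex.norm_eq_abs]; exact hQ.le
    nlinarith [norm_nonneg (c k), mul_le_mul_of_nonneg_right h1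
      (pow_nonneg (norm_nonneg x) k), pow_nonneg (norm_nonneg x) k]
  have hnorm : ∀ N : ℕ, Summable fun k => ‖c k * (Q ^ N * x) ^ k‖ := fun N =>
    hs.of_nonneg_of_le (fun _ => norm_nonneg _) (habs N)
  have hsum : ∀ N : ℕ, Summable fun k => c k * (Q ^ N * x) ^ k := fun N => (hnorm N).of_norm
  have htail : ∀ N : ℕ, Summable fun k => ‖c (k + 1) * x ^ (k + 1)‖ :=
    fun N => (summable_nat_add_iff 1).mpr hs
  set D : ℝ := ∑' k, ‖c (k + 1) * x ^ (k + 1)‖ with hD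
  have key : ∀ N : ℕ, ‖(∑' k, c k * (Q ^ N * x) ^ k) - c 0‖ ≤ Complex.abs Q ^ N * D := by
    intro N
    have h0 : (∑' k, c k * (Q ^ N * x) ^ k) = c 0 + ∑' k, c (k + 1) * (Q ^ N * x) ^ (k + 1) := by
      have := (hsum N).tsum_eq_zero_add
      simpa using this
    rw [h0, add_sub_cancel_left]
    have hbd : ∀ k : ℕ, ‖c (k + 1) * (Q ^ N * x) ^ (k + 1)‖
        ≤ Complex.abs Q ^ N * ‖c (k + 1) * x ^ (k + 1)‖ := by
      intro k
      rw [norm_mul, mul_pow, norm_mul, norm_mul, norm_pow]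
      have h1 : ‖Q ^ N‖ ^ (k + 1) ≤ Complex.abs Q ^ N := by
        rw [Complex.norm_eq_abs]
        calc Complex.abs (Q ^ N) ^ (k + 1)
            = Complex.abs (Q ^ N) * Complex.abs (Q ^ N) ^ k := by rw [pow_succ, mul_comm]
          _ ≤ Complex.abs (Q ^ N) * 1 := by
              refine mul_le_mul_of_nonneg_left ?_ (AbsoluteValue.nonneg _ _)
              exact pow_le_one₀ (AbsoluteValue.nonneg _ _) (abs_le_one_of_lt_one hQ N)
          _ = Complex.abs Q ^ N := by rw [mul_one, map_pow]
      nlinarith [mul_le_mul_of_nonneg_left (mul_le_mul_of_nonneg_right h1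
        (norm_nonneg (x ^ (k + 1)))) (norm_nonneg (c (k + 1)))]
    have hsub : Summable fun k => c (k + 1) * (Q ^ N * x) ^ (k + 1) :=
      ((summable_nat_add_iff 1).mpr (hsum N))
    calc ‖∑' k, c (k + 1) * (Q ^ N * x) ^ (k + 1)‖
        ≤ ∑' k, ‖c (k + 1) * (Q ^ N * x) ^ (k + 1)‖ := by
          refine norm_tsum_le_tsum_norm ?_
          exact (summable_nat_add_iff 1).mpr (hnorm N)
      _ ≤ ∑' k, Complex.abs Q ^ N * ‖c (k + 1) * x ^ (k + 1)‖ := by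
          refine Summable.tsum_le_tsum hbd ?_ ?_
          · exact (summable_nat_add_iff 1).mpr (hnorm N)
          · exact (htail N).mul_left _
      _ = Complex.abs Q ^ N * D := by rw [tsum_mul_left]
  have hz : Tendsto (fun N : ℕ => Complex.abs Q ^ N * D) atTop (nhds 0) := by
    simpa using (tendsto_pow_atTop_nhds_zero_of_lt_one (AbsoluteValue.nonneg _ Q) hQ).mul_const D
  have := squeeze_zero_norm key hz
  have h2 : Tendsto (fun N => (∑' k, c k * (Q ^ N * x) ^ k) - c 0 + c 0) atTop (nhds (0 + c 0)) :=
    this.add tendsto_const_nhds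
  simpa using h2

section Euler
variable {Q : ℂ}

/-- Functional equation for Euler's first series. -/
lemma eulerI_fe (hQ : Complex.abs Q < 1) {x : ℂ} (hx : Complex.abs x < 1) :
    (∑' n, (Q * x) ^ n / qp Q Q n) = (1 - x) * ∑' n, x ^ n / qp Q Q n := by
  have hQx : Complex.abs (Q * x) < 1 := by
    rw [map_mul]
    nlinarith [AbsoluteValue.nonneg Complex.abs Q, AbsoluteValue.nonneg Complex.abs x]
  have hA : HasSum (fun n => x ^ n / qp Q Q n) (∑' n, x ^ n / qp Q Q n) :=
    ((summable_geo_qp hQ hx).of_norm).hasSum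
  have hB := hA.mul_left x
  have hw : ∃ w : ℕ → ℂ, w 0 = 0 ∧ ∀ n : ℕ, w (n + 1) = x ^ (n + 1) / qp Q Q n :=
    ⟨fun n => Nat.rec 0 (fun m _ => x ^ (m + 1) / qp Q Q m) n, rfl, fun _ => rfl⟩
  obtain ⟨w, hw0, hws⟩ := hw
  have hB' : HasSum (fun n => w (n + 1)) (x * ∑' n, x ^ n / qp Q Q n) := by
    refine hB.congr_fun ?_
    intro n
    rw [hws, pow_succ, mul_comm (x ^ n) x, mul_div_assoc]
  have hw' : HasSum w (x * ∑' n, x ^ n / qp Q Q n) := by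
    have := (hasSum_nat_add_iff (f := w) 1).mp hB'
    simpa [hw0] using this
  have hsub := hA.sub hw'
  have hterm : ∀ n : ℕ, x ^ n / qp Q Q n - w n = (Q * x) ^ n / qp Q Q n := by
    intro n
    cases n with
    | zero => simp [hw0]
    | succ m =>
      rw [hws, qp_succ]
      have h1 := qp_q_ne hQ m
      have h2 := factor_ne hQ m
      field_simp
      ring
  have hfinal : HasSum (fun n => (Q * x) ^ n / qp Q Q n)
      ((∑' n, x ^ n / qp Q Q n) - x * ∑' n, x ^ n / qp Q Q n) := hsub.congr_fun fun n => (hterm n).symm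
  rw [hfinal.tsum_eq]
  ring

lemma eulerI_iterate (hQ : Complex.abs Q < 1) :
    ∀ (N : ℕ) {x : ℂ}, Complex.abs x < 1 →
      (∑' n, (Q ^ N * x) ^ n / qp Q Q n) = qp x Q N * ∑' n, x ^ n / qp Q Q n := by
  intro N
  induction N with
  | zero => intro x _; simp [qp]
  | succ m ih =>
    intro x hx
    have hQx : Complex.abs (Q * x) < 1 := by
      rw [map_mul]
      nlinarith [AbsoluteValue.nonneg Complex.abs Q, AbsoluteValue.nonneg Complex.abs x]
    have step1 : (∑' n, (Q ^ (m + 1) * x) ^ n / qp Q Q n)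
        = qp (Q * x) Q m * ∑' n, (Q * x) ^ n / qp Q Q n := by
      have := ih hQx
      rw [show Q ^ (m + 1) * x = Q ^ m * (Q * x) from by rw [pow_succ]; ring] at *
      exact this
    rw [step1, eulerI_fe hQ hx, qp_succ', mul_comm x Q]
    ring

/-- Euler's first identity: `(∑ x^n/(Q;Q)_n) * (x;Q)_∞ = 1` for `|x| < 1`. -/
theorem eulerI (hQ : Complex.abs Q < 1) {x : ℂ} (hx : Complex.abs x < 1) :
    (∑' n, x ^ n / qp Q Q n) * qpInf x Q = 1 := by
  have hs : Summable fun k => ‖(qp Q Q k)⁻¹ * x ^ k‖ := by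
    refine (summable_geo_qp hQ hx).congr fun k => ?_
    rw [div_eq_inv_mul]
  have hlim1 : Tendsto (fun N => ∑' n, (Q ^ N * x) ^ n / qp Q Q n) atTop (nhds 1) := by
    have h := tendsto_series (fun k => (qp Q Q k)⁻¹) x hQ hs
    have hc0 : ((qp Q Q 0)⁻¹ : ℂ) = 1 := by simp [qp]
    simp only [hc0] at h
    refine h.congr fun N => ?_
    exact tsum_congr fun n => (div_eq_inv_mul _ _).symm
  have hlim2 : Tendsto (fun N => qp x Q N * ∑' n, x ^ n / qp Q Q n) atTop
      (nhds (qpInf x Q * ∑' n, x ^ n / qp Q Q n)) := (tendsto_qp x hQ).mul_const _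
  have huniq := tendsto_nhds_unique (hlim1.congr fun N => eulerI_iterate hQ N hx) hlim2
  rw [mul_comm]
  exact huniq.symm

/-- Functional equation for Euler's second series. -/
lemma eulerII_fe (hQ : Complex.abs Q < 1) (x : ℂ) :
    (∑' k, ec Q k * x ^ k) = (1 - x) * ∑' k, ec Q k * (Q * x) ^ k := by
  have hA : HasSum (fun k => ec Q k * (Q * x) ^ k) (∑' k, ec Q k * (Q * x) ^ k) :=
    ((summable_ec (Q * x) hQ).of_norm).hasSum
  have hB := hA.mul_left x
  have hw : ∃ w : ℕ → ℂ, w 0 = 0 ∧ ∀ n : ℕ, w (n + 1) = ec Q n * Q ^ n * x ^ (n + 1) :=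
    ⟨fun n => Nat.rec 0 (fun m _ => ec Q m * Q ^ m * x ^ (m + 1)) n, rfl, fun _ => rfl⟩
  obtain ⟨w, hw0, hws⟩ := hw
  have hB' : HasSum (fun n => w (n + 1)) (x * ∑' k, ec Q k * (Q * x) ^ k) := by
    refine hB.congr_fun fun n => ?_
    rw [hws, mul_pow, pow_succ]
    ring
  have hw' : HasSum w (x * ∑' k, ec Q k * (Q * x) ^ k) := by
    have := (hasSum_nat_add_iff (f := w) 1).mp hB'
    simpa [hw0] using this
  have hA' : HasSum (fun k => ec Q k * Q ^ k * x ^ k) (∑' k, ec Q k * (Q * x) ^ k) := by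
    refine hA.congr_fun fun k => ?_
    rw [mul_pow]; ring
  have hsub := hA'.sub hw'
  have hterm : ∀ n : ℕ, ec Q n * Q ^ n * x ^ n - w n = ec Q n * x ^ n := by
    intro n
    cases n with
    | zero => simp [hw0]
    | succ m =>
      rw [hws, ec_succ hQ m]
      have h2 := factor_ne hQ m
      have h3 : (1 - Q * Q ^ m) * (1 - Q * Q ^ m)⁻¹ = 1 := mul_inv_cancel₀ h2
      simp only [div_eq_mul_inv]
      linear_combination (ec Q m * Q ^ m * x ^ (m + 1)) * h3
  have hfinal : HasSum (fun n => ec Q n * x ^ n)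
      ((∑' k, ec Q k * (Q * x) ^ k) - x * ∑' k, ec Q k * (Q * x) ^ k) :=
    hsub.congr_fun fun n => (hterm n).symm
  rw [hfinal.tsum_eq]
  ring

lemma eulerII_iterate (hQ : Complex.abs Q < 1) :
    ∀ (N : ℕ) (x : ℂ),
      (∑' k, ec Q k * x ^ k) = qp x Q N * ∑' k, ec Q k * (Q ^ N * x) ^ k := by
  intro N
  induction N with
  | zero => intro x; simp [qp]
  | succ m ih =>
    intro x
    rw [eulerII_fe hQ x, ih (Q * x), qp_succ', mul_comm x Q,
      show Q ^ m * (Q * x) = Q ^ (m + 1) * x from by rw [pow_succ]; ring]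
    ring

/-- Euler's second identity: `∑ ec Q k * x^k = (x;Q)_∞`. -/
theorem eulerII (hQ : Complex.abs Q < 1) (x : ℂ) :
    (∑' k, ec Q k * x ^ k) = qpInf x Q := by
  have hlim1 : Tendsto (fun N => ∑' k, ec Q k * (Q ^ N * x) ^ k) atTop (nhds 1) := by
    have h := tendsto_series (ec Q) x hQ (summable_ec x hQ)
    rwa [ec_zero] at h
  have hlim2 : Tendsto (fun N => qp x Q N * ∑' k, ec Q k * (Q ^ N * x) ^ k) atTop
      (nhds (qpInf x Q * 1)) := (tendsto_qp x hQ).mul hlim1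
  have hconst : Tendsto (fun _ : ℕ => ∑' k, ec Q k * x ^ k) atTop
      (nhds (∑' k, ec Q k * x ^ k)) := tendsto_const_nhds
  have huniq := tendsto_nhds_unique
    (hconst.congr fun N => eulerII_iterate hQ N x) hlim2
  rw [huniq, mul_one]

end Euler

set_option maxHeartbeats 1600000 in
/-- common bibasic generalization of Entries 1.4.3 and 1.4.4. -/
theorem entry_1_4_3_and_4_bibasic (q h t a b : ℂ)
    (hqh : ‖q ^ h‖ < 1) (hqt : ‖q ^ t‖ < 1)
    (hqht : ‖q ^ (h * t)‖ < 1)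
    (haq : ‖a * q ^ t‖ < 1)
    (h1 : ∀ j : ℕ, qp (q ^ t) (q ^ t) j ≠ 0)
    (h2 : ∀ j : ℕ, qpc (b * q) (q ^ h) (q ^ (h * t)) j ≠ 0)
    (h3 : ∀ j : ℕ, qpInf (b * q * (q ^ (h * t)) ^ j) (q ^ h) ≠ 0)
    (h4 : qpInf (a * q ^ t) (q ^ t) ≠ 0)
    (h5 : qpInf (b * q) (q ^ h) ≠ 0)
    (h6 : ∀ k : ℕ, qp (q ^ h) (q ^ h) k ≠ 0)
    (h7 : ∀ k : ℕ, qpInf (a * q ^ t * (q ^ (h * t)) ^ k) (q ^ t) ≠ 0) :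
    ∑' j : ℕ, (a * q ^ t) ^ j /
        (qp (q ^ t) (q ^ t) j * qpc (b * q) (q ^ h) (q ^ (h * t)) j)
    = (1 / (qpInf (a * q ^ t) (q ^ t) * qpInf (b * q) (q ^ h))) *
      ∑' k : ℕ, (qpc (a * q ^ t) (q ^ t) (q ^ (h * t)) k / qp (q ^ h) (q ^ h) k) *
        (-b * q) ^ k * (q ^ h) ^ (k * (k - 1) / 2) := by
  set Q1 : ℂ := q ^ t with hQ1
  set Q2 : ℂ := q ^ h with hQ2
  set R : ℂ := q ^ (h * t) with hR
  set A : ℂ := a * Q1 with hA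
  set B : ℂ := b * q with hB
  -- abs facts
  have habsARk : ∀ k : ℕ, Complex.abs (A * R ^ k) < 1 := by
    intro k
    rw [map_mul]
    calc Complex.abs A * Complex.abs (R ^ k) ≤ Complex.abs A * 1 :=
          mul_le_mul_of_nonneg_left (abs_le_one_of_lt_one hqht k) (AbsoluteValue.nonneg _ _)
      _ < 1 := by rw [mul_one]; exact haq
  -- the double-sum family
  set F : ℕ × ℕ → ℂ := fun p =>
    A ^ p.1 / qp Q1 Q1 p.1 * (ec Q2 p.2 * B ^ p.2 * R ^ (p.1 * p.2)) with hF
  -- summability of F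
  have hGsum : Summable fun j => ‖A ^ j / qp Q1 Q1 j‖ := summable_geo_qp hqt haq
  have hEsum : Summable fun k => ‖ec Q2 k * B ^ k‖ := summable_ec B hqh
  have hbound : ∀ p : ℕ × ℕ, ‖F p‖ ≤ ‖A ^ p.1 / qp Q1 Q1 p.1‖ * ‖ec Q2 p.2 * B ^ p.2‖ := by
    intro p
    rw [hF]
    simp only
    rw [norm_mul, norm_mul, ← mul_assoc]
    have hRk : ‖R ^ (p.1 * p.2)‖ ≤ 1 := by
      rw [Complex.norm_eq_abs]; exact abs_le_one_of_lt_one hqht _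
    exact mul_le_of_le_one_right (by positivity) hRk
  have hFsum : Summable F := by
    refine Summable.of_norm_bounded ?_ hbound
    exact hGsum.mul_of_nonneg hEsum (fun j => norm_nonneg _) (fun k => norm_nonneg _)
  -- row sums
  have hrow : ∀ j : ℕ, (∑' k, F (j, k)) = A ^ j / qp Q1 Q1 j * qpInf (B * R ^ j) Q2 := by
    intro j
    have hcongr : ∀ k : ℕ, F (j, k) = A ^ j / qp Q1 Q1 j * (ec Q2 k * (B * R ^ j) ^ k) := by
      intro k
      rw [hF]
      simp only
      rw [show (B * R ^ j) ^ k = B ^ k * R ^ (j * k) from by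
        rw [mul_pow, ← pow_mul, Nat.mul_comm]]
      ring
    rw [tsum_congr hcongr, tsum_mul_left, eulerII hqh (B * R ^ j)]
  -- column sums
  have hcol : ∀ k : ℕ, (∑' j, F (j, k))
      = ec Q2 k * B ^ k * (1 / qpInf (A * R ^ k) Q1) := by
    intro k
    have hcongr : ∀ j : ℕ, F (j, k) = ec Q2 k * B ^ k * ((A * R ^ k) ^ j / qp Q1 Q1 j) := by
      intro j
      rw [hF]
      simp only
      rw [show (A * R ^ k) ^ j = A ^ j * R ^ (j * k) from by
        rw [mul_pow, ← pow_mul, Nat.mul_comm]]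
      ring
    rw [tsum_congr hcongr, tsum_mul_left]
    congr 1
    have he := eulerI hqt (habsARk k)
    rw [eq_div_iff (h7 k)]
    exact he
  -- summability of rows and columns
  have hrowS : ∀ j : ℕ, Summable fun k => F (j, k) := fun j => hFsum.prod_factor j
  have hcolS : ∀ k : ℕ, Summable fun j => F (j, k) := fun k => hFsum.prod_symm.prod_factor k
  -- swap
  have hswap : (∑' j : ℕ, ∑' k : ℕ, F (j, k)) = ∑' k : ℕ, ∑' j : ℕ, F (j, k) :=
    (Summable.tsum_comm' (f := fun j k => F (j, k)) hFsum hrowS hcolS).symm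
  -- LHS computation
  have hLHS : (∑' j : ℕ, A ^ j / (qp Q1 Q1 j * qpc B Q2 R j))
      = (1 / qpInf B Q2) * ∑' j : ℕ, ∑' k : ℕ, F (j, k) := by
    rw [← tsum_mul_left]
    refine tsum_congr fun j => ?_
    rw [hrow j, qpc]
    have hj1 := h1 j
    have hj3 := h3 j
    field_simp
  -- RHS computation
  have hRHS : (∑' k : ℕ, qpc A Q1 R k / qp Q2 Q2 k * (-b * q) ^ k * Q2 ^ (k * (k - 1) / 2))
      = qpInf A Q1 * ∑' k : ℕ, ∑' j : ℕ, F (j, k) := by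
    rw [← tsum_mul_left]
    refine tsum_congr fun k => ?_
    rw [hcol k, qpc, ec]
    have hk6 := h6 k
    have hk7 := h7 k
    rw [show (-b * q) ^ k = (-1) ^ k * (b * q) ^ k from by rw [neg_mul, neg_pow]]
    rw [← hB]
    field_simp
  calc ∑' j : ℕ, A ^ j / (qp Q1 Q1 j * qpc B Q2 R j)
      = (1 / qpInf B Q2) * ∑' j : ℕ, ∑' k : ℕ, F (j, k) := hLHS
    _ = (1 / qpInf B Q2) * ∑' k : ℕ, ∑' j : ℕ, F (j, k) := by rw [hswap]
    _ = (1 / (qpInf A Q1 * qpInf B Q2)) *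
        (qpInf A Q1 * ∑' k : ℕ, ∑' j : ℕ, F (j, k)) := by
        field_simp
    _ = (1 / (qpInf A Q1 * qpInf B Q2)) *
        ∑' k : ℕ, qpc A Q1 R k / qp Q2 Q2 k * (-b * q) ^ k * Q2 ^ (k * (k - 1) / 2) := by
        rw [hRHS]
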